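/- For all integers n ≥ 1 and k ≥ 1, the multiplication map φ^{(n,k)} : 𝓘 ⊗_ℂ 𝓗 → 𝒫(M_{k×n}) is surjective; equivalently, every polynomial P ∈ 𝒫(M_{k×n}) can be written as a finite sum P = Σ_α I_α·H_α with all I_α ∈ 𝓘 and all H_α ∈ 𝓗. -/

import Mathlib

open MvPolynomial TensorProduct

set_option synthInstance.maxHeartbeats 1000000
set_option maxHeartbeats 1000000

noncomputable section

abbrev P (n k : ℕ) : Type := MvPolynomial (Fin k × Fin n) ℂ

/-- r_{ij} = Σ_m x_{im} x_{j,n+1-m} -/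
def rpoly (n k : ℕ) (i j : Fin k) : P n k :=
  ∑ m : Fin n, X (i, m) * X (j, m.rev)

/-- the subalgebra of invariants -/
def InvAlg (n k : ℕ) : Subalgebra ℂ (P n k) :=
  Algebra.adjoin ℂ (Set.range fun p : Fin k × Fin k => rpoly n k p.1 p.2)

/-- Laplace operators -/
def Δop (n k : ℕ) (i j : Fin k) : P n k →ₗ[ℂ] P n k :=
  ∑ m : Fin n, ((pderiv (i, m)).toLinearMap ∘ₗ (pderiv (j, m.rev)).toLinearMap)

/-- harmonic polynomials -/
def Harm (n k : ℕ) : Submodule ℂ (P n k) :=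
  ⨅ (i : Fin k) (j : Fin k), LinearMap.ker (Δop n k i j)

/-- multiplication map restricted to a subspace F of harmonics -/
def φF (n k : ℕ) (F : Submodule ℂ (P n k)) :
    (InvAlg n k) ⊗[ℂ] F →ₗ[ℂ] P n k :=
  TensorProduct.lift ((LinearMap.mul ℂ (P n k)).compl₁₂
    (InvAlg n k).val.toLinearMap F.subtype)

def φ (n k : ℕ) : (InvAlg n k) ⊗[ℂ] (Harm n k) →ₗ[ℂ] P n k := φF n k (Harm n k)

-- AUX START

/-- factorial of a multi-index -/
def facN (n k : ℕ) (α : (Fin k × Fin n) →₀ ℕ) : ℕ :=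
  ∏ q : Fin k × Fin n, (α q).factorial

lemma facN_pos (n k : ℕ) (α : (Fin k × Fin n) →₀ ℕ) : 0 < facN n k α :=
  Finset.prod_pos fun q _ => Nat.factorial_pos _

lemma facN_add_single (n k : ℕ) (α : (Fin k × Fin n) →₀ ℕ) (p : Fin k × Fin n) :
    facN n k (α + Finsupp.single p 1) = (α p + 1) * facN n k α := by
  rw [facN, facN, ← Finset.mul_prod_erase Finset.univ _ (Finset.mem_univ p),
    ← Finset.mul_prod_erase Finset.univ (fun q => (α q).factorial) (Finset.mem_univ p)]
  have h1 : ∀ q ∈ Finset.univ.erase p,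
      ((α + Finsupp.single p 1 : (Fin k × Fin n) →₀ ℕ) q).factorial = (α q).factorial := by
    intro q hq
    rw [Finsupp.add_apply, Finsupp.single_apply,
      if_neg (Ne.symm (Finset.mem_erase.mp hq).1), add_zero]
  rw [Finset.prod_congr rfl h1, Finsupp.add_apply, Finsupp.single_eq_same,
    Nat.factorial_succ, mul_assoc]

/-- the Fischer bilinear pairing -/
def Bform (n k : ℕ) : P n k →ₗ[ℂ] P n k →ₗ[ℂ] ℂ :=
  (basisMonomials (Fin k × Fin n) ℂ).constr ℂ
    (fun α => (facN n k α : ℂ) • lcoeff ℂ α)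

lemma Bform_monomial (n k : ℕ) (α : (Fin k × Fin n) →₀ ℕ) (a : ℂ) (g : P n k) :
    Bform n k (monomial α a) g = a * ((facN n k α : ℂ) * coeff α g) := by
  have h : (monomial α a : P n k) = a • (basisMonomials (Fin k × Fin n) ℂ) α := by
    rw [coe_basisMonomials]
    rw [smul_monomial, smul_eq_mul, mul_one]
  rw [Bform, h, map_smul, LinearMap.smul_apply, Module.Basis.constr_basis, LinearMap.smul_apply,
    smul_eq_mul, smul_eq_mul, lcoeff_apply]

lemma Bform_apply (n k : ℕ) (f g : P n k) :
    Bform n k f g = ∑ α ∈ f.support, coeff α f * ((facN n k α : ℂ) * coeff α g) := by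
  conv_lhs => rw [f.as_sum]
  rw [map_sum, LinearMap.sum_apply]
  exact Finset.sum_congr rfl fun α _ => Bform_monomial n k α _ g

lemma coeff_pderiv (n k : ℕ) (p : Fin k × Fin n) (α : (Fin k × Fin n) →₀ ℕ) (g : P n k) :
    coeff α ((pderiv p) g) = ((α p : ℂ) + 1) * coeff (α + Finsupp.single p 1) g := by
  induction g using MvPolynomial.induction_on' with
  | monomial β b =>
    rw [pderiv_monomial, coeff_monomial, coeff_monomial]
    by_cases hβ : β = α + Finsupp.single p 1
    · subst hβ
      rw [if_pos (add_tsub_cancel_right α (Finsupp.single p 1)), if_pos rfl]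
      rw [Finsupp.add_apply, Finsupp.single_eq_same]
      push_cast
      ring
    · rw [if_neg hβ]
      by_cases h2 : β - Finsupp.single p 1 = α
      · rw [if_pos h2]
        have hp : β p = 0 := by
          by_contra hne
          have hle : Finsupp.single p 1 ≤ β := by
            rw [Finsupp.single_le_iff]
            omega
          have := tsub_add_cancel_of_le hle
          rw [h2] at this
          exact hβ this.symm
        rw [hp]
        push_cast
        ring
      · rw [if_neg h2, mul_zero]
  | add f1 f2 h1 h2 =>
    rw [map_add, coeff_add, coeff_add, h1, h2]
    ring

lemma Bform_X_mul (n k : ℕ) (p : Fin k × Fin n) (f g : P n k) :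
    Bform n k (X p * f) g = Bform n k f ((pderiv p) g) := by
  induction f using MvPolynomial.induction_on' with
  | monomial α a =>
    rw [X, monomial_mul, one_mul, Bform_monomial, Bform_monomial, coeff_pderiv,
      add_comm (Finsupp.single p 1) α, facN_add_single]
    push_cast
    ring
  | add f1 f2 h1 h2 =>
    rw [mul_add, map_add, map_add, LinearMap.add_apply, LinearMap.add_apply, h1, h2]

lemma Bform_rpoly (n k : ℕ) (i j : Fin k) (q g : P n k) :
    Bform n k (rpoly n k i j * q) g = Bform n k q (Δop n k i j g) := by
  rw [rpoly, Finset.sum_mul, map_sum, LinearMap.sum_apply, Δop, LinearMap.sum_apply, map_sum]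
  refine Finset.sum_congr rfl fun m _ => ?_
  have h : X (i, m) * X (j, m.rev) * q = X (j, m.rev) * (X (i, m) * q) := by ring
  rw [h, Bform_X_mul, Bform_X_mul, LinearMap.comp_apply]
  rfl

/-- coefficientwise complex conjugation -/
def conjP (n k : ℕ) : P n k → P n k := MvPolynomial.map (starRingEnd ℂ)

lemma support_conjP (n k : ℕ) (g : P n k) : (conjP n k g).support = g.support :=
  support_map_of_injective g (starRingEnd ℂ).injective

lemma coeff_conjP (n k : ℕ) (α) (g : P n k) :
    coeff α (conjP n k g) = (starRingEnd ℂ) (coeff α g) := coeff_map _ _ _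

lemma totalDegree_conjP (n k : ℕ) (g : P n k) :
    (conjP n k g).totalDegree = g.totalDegree := by
  rw [totalDegree, totalDegree, support_conjP]

lemma Bform_conjP_self (n k : ℕ) {g : P n k} (hg : g ≠ 0) :
    Bform n k (conjP n k g) g ≠ 0 := by
  have h : Bform n k (conjP n k g) g =
      ((∑ α ∈ g.support, (facN n k α : ℝ) * Complex.normSq (coeff α g) : ℝ) : ℂ) := by
    rw [Bform_apply, support_conjP]
    push_cast
    refine Finset.sum_congr rfl fun α _ => ?_
    rw [coeff_conjP]
    have := Complex.normSq_eq_conj_mul_self (z := coeff α g)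
    rw [this]
    ring
  rw [h]
  rw [Complex.ofReal_ne_zero]
  refine ne_of_gt (Finset.sum_pos (fun α hα => ?_) (support_nonempty.mpr hg))
  have h1 : (0:ℝ) < (facN n k α : ℝ) := by exact_mod_cast facN_pos n k α
  have h2 : 0 < Complex.normSq (coeff α g) := by
    rw [Complex.normSq_pos]
    exact mem_support_iff.mp hα
  positivity

lemma conjP_rpoly_mul (n k : ℕ) (i j : Fin k) (q : P n k) :
    conjP n k (rpoly n k i j * q) = rpoly n k i j * conjP n k q := by
  rw [conjP, map_mul]
  congr 1
  rw [rpoly, map_sum]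
  simp

lemma totalDegree_pderiv_le (n k : ℕ) (p : Fin k × Fin n) (f : P n k) (N : ℕ)
    (hf : f.totalDegree ≤ N + 1) : ((pderiv p) f).totalDegree ≤ N := by
  have h2 : (pderiv p) f =
      ∑ α ∈ f.support, monomial (α - Finsupp.single p 1) (coeff α f * (α p : ℂ)) := by
    conv_lhs => rw [f.as_sum]
    rw [map_sum]
    exact Finset.sum_congr rfl fun α _ => pderiv_monomial
  rw [h2]
  refine (totalDegree_finset_sum _ _).trans (Finset.sup_le fun α hα => ?_)
  by_cases hp : α p = 0
  · rw [hp]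
    push_cast
    rw [mul_zero, monomial_zero, totalDegree_zero]
    exact Nat.zero_le N
  · refine (totalDegree_monomial_le _ _).trans ?_
    have hle : Finsupp.single p 1 ≤ α := by
      rw [Finsupp.single_le_iff]; omega
    have hsum : (α - Finsupp.single p 1).sum (fun _ e => e) + 1 = α.sum (fun _ e => e) := by
      conv_rhs => rw [← tsub_add_cancel_of_le hle]
      rw [Finsupp.sum_add_index' (fun _ => rfl) (fun _ _ _ => rfl),
        Finsupp.sum_single_index rfl]
    have hαs : α.sum (fun _ e => e) ≤ N + 1 := le_trans (le_totalDegree hα) hf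
    simp only [Function.id_def]
    omega

lemma totalDegree_Δop_le (n k : ℕ) (i j : Fin k) (f : P n k) (N : ℕ)
    (hf : f.totalDegree ≤ N + 2) : (Δop n k i j f).totalDegree ≤ N := by
  rw [Δop, LinearMap.sum_apply]
  refine (totalDegree_finset_sum _ _).trans (Finset.sup_le fun m _ => ?_)
  rw [LinearMap.comp_apply]
  exact totalDegree_pderiv_le n k _ _ N
    (totalDegree_pderiv_le n k _ _ (N + 1) hf)

lemma totalDegree_rpoly_le (n k : ℕ) (i j : Fin k) : (rpoly n k i j).totalDegree ≤ 2 := by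
  rw [rpoly]
  refine (totalDegree_finset_sum _ _).trans (Finset.sup_le fun m _ => ?_)
  refine (totalDegree_mul _ _).trans ?_
  have := totalDegree_X (R := ℂ) ((i, m) : Fin k × Fin n)
  have := totalDegree_X (R := ℂ) ((j, m.rev) : Fin k × Fin n)
  omega

/-- the subspace r_{ij}·(polynomials of degree ≤ e) -/
def Wmod (n k : ℕ) (e : ℕ) : Submodule ℂ (P n k) :=
  ⨆ p : Fin k × Fin k, (restrictTotalDegree (Fin k × Fin n) ℂ e).map
    (LinearMap.mulLeft ℂ (rpoly n k p.1 p.2))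

instance (n k e : ℕ) : FiniteDimensional ℂ (Wmod n k e) := by
  rw [Wmod]
  infer_instance

lemma Wmod_le_RTD (n k e : ℕ) :
    Wmod n k e ≤ restrictTotalDegree (Fin k × Fin n) ℂ (e + 2) := by
  refine iSup_le fun p => ?_
  rintro x ⟨q, hq, rfl⟩
  rw [LinearMap.mulLeft_apply, mem_restrictTotalDegree]
  refine (totalDegree_mul _ _).trans ?_
  have h1 := totalDegree_rpoly_le n k p.1 p.2
  have h2 := (mem_restrictTotalDegree _ _ _).mp hq
  omega

lemma rpoly_mul_mem_Wmod (n k e : ℕ) (i j : Fin k) {q : P n k}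
    (hq : q.totalDegree ≤ e) : rpoly n k i j * q ∈ Wmod n k e := by
  refine Submodule.mem_iSup_of_mem (i, j) ?_
  exact ⟨q, (mem_restrictTotalDegree _ _ _).mpr hq, rfl⟩

lemma conjP_mem_Wmod (n k e : ℕ) {w : P n k} (hw : w ∈ Wmod n k e) :
    conjP n k w ∈ Wmod n k e := by
  refine Submodule.iSup_induction _ (motive := fun x => conjP n k x ∈ Wmod n k e) hw ?_ ?_ ?_
  · rintro p x ⟨q, hq, rfl⟩
    rw [LinearMap.mulLeft_apply, conjP_rpoly_mul]
    refine rpoly_mul_mem_Wmod n k e p.1 p.2 ?_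
    rw [totalDegree_conjP]
    exact (mem_restrictTotalDegree _ _ _).mp hq
  · show conjP n k 0 ∈ Wmod n k e
    rw [conjP, map_zero]
    exact Submodule.zero_mem _
  · intro x y hx hy
    show conjP n k (x + y) ∈ Wmod n k e
    rw [conjP, map_add]
    exact Submodule.add_mem _ hx hy

lemma exists_orth (n k : ℕ) (W : Submodule ℂ (P n k)) [FiniteDimensional ℂ W]
    (hc : ∀ w ∈ W, conjP n k w ∈ W) (f : P n k) :
    ∃ w ∈ W, ∀ u ∈ W, Bform n k u (f - w) = 0 := by
  set T : P n k →ₗ[ℂ] Module.Dual ℂ W := ((Bform n k).domRestrict W).flip with hT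
  have hinj : Function.Injective (T ∘ₗ W.subtype) := by
    rw [← LinearMap.ker_eq_bot, eq_bot_iff]
    rintro ⟨w, hw⟩ hker
    rw [LinearMap.mem_ker] at hker
    have h0 : Bform n k (conjP n k w) w = 0 := by
      have := LinearMap.congr_fun hker ⟨conjP n k w, hc w hw⟩
      simpa [hT] using this
    have hw0 : w = 0 := by
      by_contra hne
      exact Bform_conjP_self n k hne h0
    simp [hw0]
  have hsurj : Function.Surjective (T ∘ₗ W.subtype) := by
    refine (LinearMap.injective_iff_surjective_of_finrank_eq_finrank ?_).mp hinj
    rw [Subspace.dual_finrank_eq]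
  obtain ⟨w, hw⟩ := hsurj (T f)
  refine ⟨w.1, w.2, fun u hu => ?_⟩
  have := LinearMap.congr_fun hw ⟨u, hu⟩
  rw [LinearMap.comp_apply] at this
  rw [map_sub]
  simp only [hT, LinearMap.flip_apply, LinearMap.domRestrict_apply] at this ⊢
  rw [Submodule.subtype_apply] at this
  rw [← this, sub_self]

lemma exists_harmonic_decomp (n k e : ℕ) (f : P n k) (hf : f.totalDegree ≤ e + 2) :
    ∃ w ∈ Wmod n k e, f - w ∈ Harm n k := by
  obtain ⟨w, hwW, horth⟩ := exists_orth n k (Wmod n k e)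
    (fun w hw => conjP_mem_Wmod n k e hw) f
  refine ⟨w, hwW, ?_⟩
  rw [Harm]
  simp only [Submodule.mem_iInf, LinearMap.mem_ker]
  intro i j
  set g := Δop n k i j (f - w) with hg
  have hdegfw : (f - w).totalDegree ≤ e + 2 :=
    (totalDegree_sub f w).trans
      (max_le hf ((mem_restrictTotalDegree _ _ _).mp (Wmod_le_RTD n k e hwW)))
  have hdg : g.totalDegree ≤ e := totalDegree_Δop_le n k i j _ e hdegfw
  by_contra hne
  have hu : rpoly n k i j * conjP n k g ∈ Wmod n k e := by
    refine rpoly_mul_mem_Wmod n k e i j ?_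
    rw [totalDegree_conjP]
    exact hdg
  have h0 := horth _ hu
  rw [Bform_rpoly, ← hg] at h0
  exact Bform_conjP_self n k hne h0

lemma mem_Harm_of_totalDegree_le_one (n k : ℕ) {f : P n k} (hf : f.totalDegree ≤ 1) :
    f ∈ Harm n k := by
  rw [Harm]
  simp only [Submodule.mem_iInf, LinearMap.mem_ker]
  intro i j
  rw [Δop, LinearMap.sum_apply]
  refine Finset.sum_eq_zero fun m _ => ?_
  rw [LinearMap.comp_apply]
  have h1 : ((pderiv ((j, m.rev) : Fin k × Fin n)) f).totalDegree ≤ 0 :=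
    totalDegree_pderiv_le n k _ f 0 hf
  have h2 : ((pderiv ((j, m.rev) : Fin k × Fin n)) f) =
      ∑ α ∈ ((pderiv ((j, m.rev) : Fin k × Fin n)) f).support,
        monomial α (coeff α ((pderiv ((j, m.rev) : Fin k × Fin n)) f)) := as_sum _
  simp only [Derivation.coeFn_coe]
  rw [h2, map_sum]
  refine Finset.sum_eq_zero fun α hα => ?_
  rw [pderiv_monomial]
  have h3 : α ((i, m) : Fin k × Fin n) = 0 :=
    (totalDegree_eq_zero_iff _ _).mp (Nat.le_zero.mp h1) α hα _
  rw [h3]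
  push_cast
  rw [mul_zero, monomial_zero]

lemma harm_mem_range (n k : ℕ) {h : P n k} (hh : h ∈ Harm n k) :
    h ∈ LinearMap.range (φ n k) := by
  refine ⟨(1 : InvAlg n k) ⊗ₜ (⟨h, hh⟩ : Harm n k), ?_⟩
  simp [φ, φF]

lemma rpoly_mem_InvAlg (n k : ℕ) (i j : Fin k) : rpoly n k i j ∈ InvAlg n k :=
  Algebra.subset_adjoin ⟨(i, j), rfl⟩

lemma mul_mem_range (n k : ℕ) {r x : P n k} (hr : r ∈ InvAlg n k)
    (hx : x ∈ LinearMap.range (φ n k)) : r * x ∈ LinearMap.range (φ n k) := by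
  obtain ⟨t, rfl⟩ := hx
  suffices h : ∀ t : (InvAlg n k) ⊗[ℂ] (Harm n k), ∃ t', φ n k t' = r * φ n k t by
    obtain ⟨t', ht'⟩ := h t
    exact ⟨t', ht'⟩
  intro t
  induction t using TensorProduct.induction_on with
  | zero => exact ⟨0, by simp⟩
  | tmul a b =>
    refine ⟨((⟨r, hr⟩ : InvAlg n k) * a) ⊗ₜ b, ?_⟩
    simp [φ, φF, mul_assoc]
  | add x y hx hy =>
    obtain ⟨tx, htx⟩ := hx
    obtain ⟨ty, hty⟩ := hy
    exact ⟨tx + ty, by rw [map_add, map_add, htx, hty, mul_add]⟩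

/-- the multiplication map φ^{(n,k)} : 𝓘 ⊗ 𝓗 → 𝒫 is surjective:
every polynomial is a finite sum of products of an invariant with a harmonic. -/
theorem separation_of_variables_surjective (n k : ℕ) (hn : 1 ≤ n) (hk : 1 ≤ k) :
    Function.Surjective (φ n k) := by
  have main : ∀ d : ℕ, ∀ f : P n k, f.totalDegree ≤ d → f ∈ LinearMap.range (φ n k) := by
    intro d
    induction d using Nat.strong_induction_on with
    | _ d IH =>
      intro f hf
      rcases Nat.eq_zero_or_pos d with hd | hd
      · subst hd
        exact harm_mem_range n k (mem_Harm_of_totalDegree_le_one n k (hf.trans (by omega)))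
      · have hf' : f.totalDegree ≤ (d - 2) + 2 := hf.trans (by omega)
        obtain ⟨w, hwW, hharm⟩ := exists_harmonic_decomp n k (d - 2) f hf'
        have hwS : w ∈ LinearMap.range (φ n k) := by
          revert hwW
          refine fun hwW => Submodule.iSup_induction _
            (motive := fun x => x ∈ LinearMap.range (φ n k)) hwW ?_ ?_ ?_
          · rintro p x ⟨q, hq, rfl⟩
            rw [LinearMap.mulLeft_apply]
            refine mul_mem_range n k (rpoly_mem_InvAlg n k p.1 p.2) ?_
            exact IH (d - 2) (by omega) q ((mem_restrictTotalDegree _ _ _).mp hq)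
          · exact Submodule.zero_mem _
          · intro x y hx hy
            exact Submodule.add_mem _ hx hy
        have : f = (f - w) + w := by ring
        rw [this]
        exact Submodule.add_mem _ (harm_mem_range n k hharm) hwS
  intro f
  exact main f.totalDegree f le_rfl
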